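/- Let (X,B,b) be a coarse proximity space. Then the following are equivalent: (1) asdim(X) = 0, i.e. every uniformly bounded cover of X refines some uniformly bounded cover of X of order at most 1; (2) for every uniformly bounded cover V of X there is a uniformly bounded cover U of X whose V-multiplicity is at most 1; (3) for every uniformly bounded cover U of X, the collection of U-components of X is a uniformly bounded family. -/
import Mathlib


universe u v w

/-- A coarse proximity space: a set with a bornology and a coarse proximity relation. -/
structure CoarseProximity (X : Type u) where
  bounded : Set (Set X)
  close : Set X → Set X → Prop
  empty_mem : ∅ ∈ bounded
  singleton_mem : ∀ x : X, {x} ∈ bounded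
  subset_mem : ∀ A ∈ bounded, ∀ C : Set X, C ⊆ A → C ∈ bounded
  union_mem : ∀ A ∈ bounded, ∀ C ∈ bounded, A ∪ C ∈ bounded
  symm : ∀ A C : Set X, close A C → close C A
  unbounded_left : ∀ A C : Set X, close A C → A ∉ bounded
  unbounded_right : ∀ A C : Set X, close A C → C ∉ bounded
  inter_close : ∀ A C : Set X, A ∩ C ∉ bounded → close A C
  union_close_iff : ∀ A C D : Set X, (close (A ∪ C) D ↔ close A D ∨ close C D)
  strong : ∀ A C : Set X, ¬ close A C → ∃ E : Set X, ¬ close A E ∧ ¬ close Eᶜ C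

namespace CoarseProximity

variable {X : Type u}

/-- The weak asymptotic resemblance induced by a coarse proximity. -/
def phi (P : CoarseProximity X) (A C : Set X) : Prop :=
  (∀ C' : Set X, C' ⊆ C → C' ∉ P.bounded → P.close A C') ∧
  (∀ A' : Set X, A' ⊆ A → A' ∉ P.bounded → P.close A' C)

/-- `C ≪ A` : `A` is a coarse neighbourhood of `C`. -/
def ll (P : CoarseProximity X) (C A : Set X) : Prop :=
  ¬ P.close C Aᶜ

/-- `A ⊑ C` : `A` is a coarse subset of `C`. -/
def subord (P : CoarseProximity X) (A C : Set X) : Prop :=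
  ∀ D : Set X, P.close A D → P.close C D

/-- `A ≪_w C` : `C` is a weak coarse neighbourhood of `A`. -/
def llw (P : CoarseProximity X) (A C : Set X) : Prop :=
  ∃ D : Set X, P.ll A D ∧ P.subord D C

end CoarseProximity

/-- The star of a set `A` with respect to a collection `U`. -/
def starOf {X : Type u} (A : Set X) (U : Set (Set X)) : Set X :=
  ⋃₀ {B ∈ U | (B ∩ A).Nonempty}

/-- A uniformly bounded family in a coarse proximity space. -/
def IsUnifBoundedFamily {X : Type u} (P : CoarseProximity X) (U : Set (Set X)) : Prop :=
  (∀ B ∈ U, B ∈ P.bounded) ∧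
  ∀ A C : Set X, A ⊆ starOf C U → C ⊆ starOf A U → P.phi A C

/-- A uniformly bounded cover in a coarse proximity space. -/
def IsUnifBoundedCover {X : Type u} (P : CoarseProximity X) (U : Set (Set X)) : Prop :=
  IsUnifBoundedFamily P U ∧ ⋃₀ U = Set.univ

/-- `U` refines `V` : every member of `U` is contained in some member of `V`. -/
def CoverRefines {X : Type u} (U V : Set (Set X)) : Prop :=
  ∀ A ∈ U, ∃ B ∈ V, A ⊆ B

/-- The order of a collection of sets is at most `n`. -/
def CoverOrderLE {X : Type u} (U : Set (Set X)) (n : ℕ) : Prop :=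
  ∀ (x : X) (s : Finset (Set X)), (s : Set (Set X)) ⊆ U → (∀ B ∈ s, x ∈ B) → s.card ≤ n

/-- `asdim X ≤ n` : every uniformly bounded cover refines a uniformly bounded cover of
order at most `n+1`. -/
def AsdimLE {X : Type u} (P : CoarseProximity X) (n : ℕ) : Prop :=
  ∀ U : Set (Set X), IsUnifBoundedCover P U →
    ∃ V : Set (Set X), IsUnifBoundedCover P V ∧ CoverOrderLE V (n + 1) ∧ CoverRefines U V

/-- A b-cover of a coarse proximity space. -/
def IsBCover {X : Type u} (P : CoarseProximity X) (F : Finset (Set X)) : Prop :=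
  (∀ A ∈ F, ∀ B ∈ F, A ∈ P.bounded → B ∈ P.bounded → A = B) ∧
  (⋃ A ∈ F, A) = Set.univ ∧
  ∃ C : Set X → Set X, (⋃ A ∈ F, C A) = Set.univ ∧ ∀ A ∈ F, P.ll (C A) A

/-- A finite family is divergent if the family of complements is a b-cover. -/
def DivergentFam {X : Type u} (P : CoarseProximity X) (S : Finset (Set X)) : Prop :=
  haveI : DecidableEq (Set X) := Classical.decEq _
  IsBCover P (S.image fun A => Aᶜ)

/-- A coarsely canonical cover of a coarse proximity space. -/
def IsCoarselyCanonicalCover {X : Type u} (P : CoarseProximity X) (F : Finset (Set X)) : Prop :=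
  (∀ A ∈ F, ∀ B ∈ F, A ≠ B → A ∩ B = ∅) ∧
  (⋃ A ∈ F, A) = Set.univ ∧
  (∀ A ∈ F, ∀ B ∈ F, A ∈ P.bounded → B ∈ P.bounded → A = B) ∧
  (∀ A ∈ F, A ∉ P.bounded → ∃ K : Set X, K ∉ P.bounded ∧ P.llw K A) ∧
  (∀ A ∈ F, ∀ B ∈ F, A ≠ B → ¬ ∃ K : Set X, K ∉ P.bounded ∧ P.llw K A ∧ P.llw K B) ∧
  (∀ K D : Set X, K ∉ P.bounded → P.ll K D →
    ∃ C : Set X, C ∉ P.bounded ∧ P.ll C D ∧ ∃ A ∈ F, P.llw C A)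

/-- The order of a coarsely canonical cover is at most `m` : every `m+1` of its members
form a divergent family. -/
def CCCoverOrderLE {X : Type u} (P : CoarseProximity X) (F : Finset (Set X)) (m : ℕ) : Prop :=
  ∀ S : Finset (Set X), S ⊆ F → S.card = m + 1 → DivergentFam P S

/-- `V` coarsely refines `U`. -/
def CoarselyRefines {X : Type u} (P : CoarseProximity X) (V U : Finset (Set X)) : Prop :=
  ∀ A ∈ V, A ∉ P.bounded → ∃ B ∈ U, B ∉ P.bounded ∧ ∃ D ∈ P.bounded, A \ D ⊆ B

/-- A fine directed system of coarsely canonical covers. -/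
def IsFineDirectedSystem {X : Type u} (P : CoarseProximity X) {Ω : Type v} [Preorder Ω]
    (F : Ω → Finset (Set X)) : Prop :=
  Nonempty Ω ∧
  (∀ α β : Ω, ∃ γ : Ω, α ≤ γ ∧ β ≤ γ) ∧
  (∀ α, IsCoarselyCanonicalCover P (F α)) ∧
  (∀ α β : Ω, α ≤ β → CoarselyRefines P (F β) (F α)) ∧
  (∀ U : Finset (Set X), IsBCover P U → ∃ α, CoarselyRefines P (F α) U)

/-- The `V`-multiplicity of `U` is at most 1: no member of `V` meets two distinct
members of `U`. -/
def VMultiplicityLEOne {X : Type u} (U V : Set (Set X)) : Prop :=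
  ∀ B ∈ V, ∀ A1 ∈ U, ∀ A2 ∈ U, (A1 ∩ B).Nonempty → (A2 ∩ B).Nonempty → A1 = A2

/-- One step of a `U`-chain: `x` and `y` lie in a common member of `U`. -/
def ChainStep {X : Type u} (U : Set (Set X)) (x y : X) : Prop :=
  ∃ B ∈ U, x ∈ B ∧ y ∈ B

/-- The collection of `U`-components of `X`. -/
def UComponents {X : Type u} (U : Set (Set X)) : Set (Set X) :=
  {C | ∃ x : X, C = {y : X | Relation.TransGen (ChainStep U) x y}}


section Aux

variable {X : Type u}

lemma starOf_subset_of_refines {A : Set X} {D U : Set (Set X)} (h : CoverRefines D U) :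
    starOf A D ⊆ starOf A U := by
  rintro x ⟨B, ⟨hBD, hBA⟩, hxB⟩
  obtain ⟨W, hWU, hBW⟩ := h B hBD
  exact ⟨W, ⟨hWU, by obtain ⟨y, hy1, hy2⟩ := hBA; exact ⟨y, hBW hy1, hy2⟩⟩, hBW hxB⟩

lemma UBF_of_refines (P : CoarseProximity X) {D U : Set (Set X)}
    (hU : IsUnifBoundedFamily P U) (h : CoverRefines D U) :
    IsUnifBoundedFamily P D := by
  constructor
  · intro B hB
    obtain ⟨W, hWU, hBW⟩ := h B hB
    exact P.subset_mem W (hU.1 W hWU) B hBW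
  · intro A C hA hC
    exact hU.2 A C (hA.trans (starOf_subset_of_refines h))
      (hC.trans (starOf_subset_of_refines h))

lemma chainStep_symm {U : Set (Set X)} {x y : X} (h : ChainStep U x y) : ChainStep U y x := by
  obtain ⟨B, hB, hx, hy⟩ := h; exact ⟨B, hB, hy, hx⟩

lemma transChain_symm {U : Set (Set X)} {x y : X}
    (h : Relation.TransGen (ChainStep U) x y) : Relation.TransGen (ChainStep U) y x := by
  induction h with
  | single h => exact Relation.TransGen.single (chainStep_symm h)
  | tail _ h ih =>
      exact Relation.TransGen.trans (Relation.TransGen.single (chainStep_symm h)) ih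

lemma component_eq {U : Set (Set X)} {x1 x2 : X}
    (h : Relation.TransGen (ChainStep U) x1 x2) :
    {y : X | Relation.TransGen (ChainStep U) x1 y}
      = {y : X | Relation.TransGen (ChainStep U) x2 y} := by
  ext y
  exact ⟨fun hy => (transChain_symm h).trans hy, fun hy => h.trans hy⟩

lemma starOf_insert_empty (A : Set X) (D : Set (Set X)) :
    starOf A (insert ∅ D) = starOf A D := by
  apply Set.Subset.antisymm
  · rintro x ⟨B, ⟨hB, hne⟩, hxB⟩
    rcases hB with rfl | hB
    · rw [Set.empty_inter] at hne
      exact absurd hne Set.not_nonempty_empty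
    · exact ⟨B, ⟨hB, hne⟩, hxB⟩
  · rintro x ⟨B, ⟨hB, hne⟩, hxB⟩
    exact ⟨B, ⟨Or.inr hB, hne⟩, hxB⟩

lemma orderLE_one_eq {W : Set (Set X)} (h : CoverOrderLE W 1) {x : X} {A B : Set X}
    (hA : A ∈ W) (hB : B ∈ W) (hxA : x ∈ A) (hxB : x ∈ B) : A = B := by
  classical
  by_contra hne
  have hcard : ({A, B} : Finset (Set X)).card = 2 := Finset.card_pair hne
  have hle := h x {A, B} ?_ ?_
  · omega
  · intro s hs
    simp only [Finset.coe_insert, Finset.coe_singleton, Set.mem_insert_iff,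
      Set.mem_singleton_iff] at hs
    rcases hs with rfl | rfl <;> assumption
  · intro s hs
    simp only [Finset.mem_insert, Finset.mem_singleton] at hs
    rcases hs with rfl | rfl <;> assumption

lemma asdim_imp_mult (P : CoarseProximity X) (hA : AsdimLE P 0) :
    ∀ V : Set (Set X), IsUnifBoundedCover P V →
      ∃ U : Set (Set X), IsUnifBoundedCover P U ∧ VMultiplicityLEOne U V := by
  intro V hV
  obtain ⟨W, hW, hOrd, hRef⟩ := hA V hV
  refine ⟨W, hW, ?_⟩
  rintro B hBV A1 hA1 A2 hA2 ⟨b1, hb1A, hb1B⟩ ⟨b2, hb2A, hb2B⟩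
  obtain ⟨A, hAW, hBA⟩ := hRef B hBV
  have e1 : A1 = A := orderLE_one_eq hOrd hA1 hAW hb1A (hBA hb1B)
  have e2 : A2 = A := orderLE_one_eq hOrd hA2 hAW hb2A (hBA hb2B)
  rw [e1, e2]

lemma mult_imp_comp (P : CoarseProximity X)
    (h2 : ∀ V : Set (Set X), IsUnifBoundedCover P V →
      ∃ U : Set (Set X), IsUnifBoundedCover P U ∧ VMultiplicityLEOne U V) :
    ∀ U : Set (Set X), IsUnifBoundedCover P U → IsUnifBoundedFamily P (UComponents U) := by
  intro U hU
  obtain ⟨W, hW, hMult⟩ := h2 U hU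
  have hstep : ∀ A ∈ W, ∀ z y : X, z ∈ A → ChainStep U z y → y ∈ A := by
    intro A hAW z y hzA hch
    obtain ⟨B, hBU, hzB, hyB⟩ := hch
    have : y ∈ ⋃₀ W := by rw [hW.2]; trivial
    obtain ⟨A', hA'W, hyA'⟩ := this
    have : A = A' := hMult B hBU A hAW A' hA'W ⟨z, hzA, hzB⟩ ⟨y, hyA', hyB⟩
    rw [this]; exact hyA'
  have hRef : CoverRefines (UComponents U) W := by
    rintro C ⟨x, rfl⟩
    have : x ∈ ⋃₀ W := by rw [hW.2]; trivial
    obtain ⟨A, hAW, hxA⟩ := this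
    refine ⟨A, hAW, ?_⟩
    intro y hy
    simp only [Set.mem_setOf_eq] at hy
    induction hy with
    | single h => exact hstep A hAW x _ hxA h
    | tail _ h ih => exact hstep A hAW _ _ ih h
  exact UBF_of_refines P hW.1 hRef

lemma comp_imp_asdim (P : CoarseProximity X)
    (h3 : ∀ U : Set (Set X), IsUnifBoundedCover P U → IsUnifBoundedFamily P (UComponents U)) :
    AsdimLE P 0 := by
  intro U hU
  have hD : IsUnifBoundedFamily P (UComponents U) := h3 U hU
  refine ⟨insert ∅ (UComponents U), ⟨⟨?_, ?_⟩, ?_⟩, ?_, ?_⟩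
  · rintro B (rfl | hB)
    · exact P.empty_mem
    · exact hD.1 B hB
  · intro A C hA hC
    rw [starOf_insert_empty] at hA hC
    exact hD.2 A C hA hC
  · apply Set.eq_univ_of_forall
    intro x
    have : x ∈ ⋃₀ U := by rw [hU.2]; trivial
    obtain ⟨B, hBU, hxB⟩ := this
    exact ⟨{y | Relation.TransGen (ChainStep U) x y}, Or.inr ⟨x, rfl⟩,
      Relation.TransGen.single ⟨B, hBU, hxB, hxB⟩⟩
  · intro x s hs hmem
    apply Finset.card_le_one.2
    intro A1 h1 A2 h2
    have hx1 : x ∈ A1 := hmem A1 h1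
    have hx2 : x ∈ A2 := hmem A2 h2
    have m1 : A1 ∈ insert ∅ (UComponents U) := hs h1
    have m2 : A2 ∈ insert ∅ (UComponents U) := hs h2
    rcases m1 with rfl | ⟨x1, rfl⟩
    · exact absurd hx1 (Set.notMem_empty x)
    rcases m2 with rfl | ⟨x2, rfl⟩
    · exact absurd hx2 (Set.notMem_empty x)
    rw [component_eq (U := U) (x1 := x1) (x2 := x) hx1,
      component_eq (U := U) (x1 := x2) (x2 := x) hx2]
  · intro A hAU
    rcases A.eq_empty_or_nonempty with rfl | ⟨a, ha⟩
    · exact ⟨∅, Or.inl rfl, Set.Subset.refl _⟩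
    · refine ⟨{y | Relation.TransGen (ChainStep U) a y}, Or.inr ⟨a, rfl⟩, ?_⟩
      intro y hy
      exact Relation.TransGen.single ⟨A, hAU, ha, hy⟩

end Aux

/-- Characterization of asymptotic dimension zero for coarse proximity spaces:
`asdim(X) = 0` is equivalent both to the multiplicity condition and to the uniform
boundedness of the families of components. -/
theorem asdim_zero_characterization {X : Type u} (P : CoarseProximity X) :
    (AsdimLE P 0 ↔
      ∀ V : Set (Set X), IsUnifBoundedCover P V →
        ∃ U : Set (Set X), IsUnifBoundedCover P U ∧ VMultiplicityLEOne U V) ∧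
    (AsdimLE P 0 ↔
      ∀ U : Set (Set X), IsUnifBoundedCover P U → IsUnifBoundedFamily P (UComponents U)) := by
  have h12 := asdim_imp_mult P
  have h23 := mult_imp_comp P
  have h31 := comp_imp_asdim P
  constructor
  · exact ⟨h12, fun h2 => h31 (h23 h2)⟩
  · exact ⟨fun h1 => h23 (h12 h1), h31⟩
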